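/- Let a,b > 0. The polynomial R(x,y) = x²y² + a x² - xy + b y² + ab has a real zero if and only if ab ≤ 1/16. Consequently the map G_{b,a} has 2-periodic points (points of minimal period 2) if and only if 0 < ab < 1/16. -/

import Mathlib

/-- The map `G_β(x,y) = (y, -x + y/(β+y²))`. -/
noncomputable def Gmap (β : ℝ) (p : ℝ × ℝ) : ℝ × ℝ :=
  (p.2, -p.1 + p.2 / (β + p.2 ^ 2))

lemma stmt10_nz (a b x y : ℝ) (ha : 0 < a) (hb : 0 < b)
    (hR : x ^ 2 * y ^ 2 + a * x ^ 2 - x * y + b * y ^ 2 + a * b = 0) :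
    x ≠ 0 ∧ y ≠ 0 := by
  constructor
  · rintro rfl; nlinarith
  · rintro rfl; nlinarith

lemma stmt10_keyA (a b x y : ℝ) (ha : 0 < a) (hx : x ≠ 0)
    (hR : x ^ 2 * y ^ 2 + a * x ^ 2 - x * y + b * y ^ 2 + a * b = 0) :
    Gmap a (x, y) = (y, b / x) ∧
    y ^ 2 * (b / x) ^ 2 + b * y ^ 2 - y * (b / x) + a * (b / x) ^ 2 + b * a = 0 := by
  have hd : (0:ℝ) < a + y ^ 2 := by positivity
  constructor
  · simp only [Gmap]
    have h2 : -x + y / (a + y ^ 2) = b / x := by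
      field_simp
      linear_combination -hR
    rw [h2]
  · have h3 : y ^ 2 * (b / x) ^ 2 + b * y ^ 2 - y * (b / x) + a * (b / x) ^ 2 + b * a
        = (b / x ^ 2) * (x ^ 2 * y ^ 2 + a * x ^ 2 - x * y + b * y ^ 2 + a * b) := by
      field_simp; ring
    rw [h3, hR, mul_zero]

lemma stmt10_orbit (a b x y : ℝ) (ha : 0 < a) (hb : 0 < b)
    (hR : x ^ 2 * y ^ 2 + a * x ^ 2 - x * y + b * y ^ 2 + a * b = 0) :
    Gmap b (Gmap a (x, y)) = (b / x, a / y) ∧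
    Gmap b (Gmap a (b / x, a / y)) = (x, y) := by
  obtain ⟨hx, hy⟩ := stmt10_nz a b x y ha hb hR
  have hbx : b / x ≠ 0 := div_ne_zero (ne_of_gt hb) hx
  have hay : a / y ≠ 0 := div_ne_zero (ne_of_gt ha) hy
  obtain ⟨g1, r1⟩ := stmt10_keyA a b x y ha hx hR
  obtain ⟨g2, r2⟩ := stmt10_keyA b a y (b / x) hb hy r1
  have r2' : (b / x) ^ 2 * (a / y) ^ 2 + a * (b / x) ^ 2 - (b / x) * (a / y)
      + b * (a / y) ^ 2 + a * b = 0 := by linear_combination r2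
  obtain ⟨g3, r3⟩ := stmt10_keyA a b (b / x) (a / y) ha hbx r2'
  have hbbx : b / (b / x) = x := by field_simp
  have haay : a / (a / y) = y := by field_simp
  rw [hbbx] at g3 r3
  have r3' : (a / y) ^ 2 * x ^ 2 + b * (a / y) ^ 2 - (a / y) * x + a * x ^ 2 + b * a = 0 := by
    linear_combination r3
  obtain ⟨g4, _⟩ := stmt10_keyA b a (a / y) x hb hay r3'
  rw [haay] at g4
  refine ⟨by rw [g1, g2], by rw [g3, g4]⟩

lemma stmt10_conv (a b x y : ℝ) (ha : 0 < a) (hb : 0 < b)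
    (h : Gmap b (Gmap a (Gmap b (Gmap a (x, y)))) = (x, y))
    (hne : Gmap b (Gmap a (x, y)) ≠ (x, y)) :
    x ^ 2 * y ^ 2 + a * x ^ 2 - x * y + b * y ^ 2 + a * b = 0 := by
  have hay : (0:ℝ) < a + y ^ 2 := by positivity
  set u : ℝ := -x + y / (a + y ^ 2) with hu
  have hbu : (0:ℝ) < b + u ^ 2 := by positivity
  set v : ℝ := -y + u / (b + u ^ 2) with hv
  have hav : (0:ℝ) < a + v ^ 2 := by positivity
  have g1 : Gmap b (Gmap a (x, y)) = (u, v) := by simp only [Gmap]; rfl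
  rw [g1] at h hne
  have g2 : Gmap b (Gmap a (u, v)) = (-u + v / (a + v ^ 2),
      -v + (-u + v / (a + v ^ 2)) / (b + (-u + v / (a + v ^ 2)) ^ 2)) := by
    simp only [Gmap]
  rw [g2] at h
  have E3 : -u + v / (a + v ^ 2) = x := congrArg Prod.fst h
  have E4 : -v + x / (b + x ^ 2) = y := by
    have := congrArg Prod.snd h
    simpa [E3] using this
  have hbx : (0:ℝ) < b + x ^ 2 := by positivity
  have hcase : u ≠ x ∨ v ≠ y := by
    by_contra hc
    push_neg at hc
    exact hne (by rw [hc.1, hc.2])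
  rcases hcase with hux | hvy
  · have k1 : u * (b + x ^ 2) = x * (b + u ^ 2) := by
      have hvy2 : v + y = u / (b + u ^ 2) := by rw [hv]; ring
      have : u / (b + u ^ 2) = x / (b + x ^ 2) := by
        rw [← hvy2]; linarith [E4]
      field_simp at this
      linarith [this]
    have k2 : (u - x) * (b - u * x) = 0 := by linear_combination k1
    have hub : u * x = b := by
      rcases mul_eq_zero.mp k2 with h' | h'
      · exact absurd (by linarith) hux
      · linarith
    have hx0 : x ≠ 0 := by rintro rfl; simp at hub; nlinarith
    have E1 : (u + x) * (a + y ^ 2) = y := by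
      rw [hu]; field_simp; ring
    have hub' : u = b / x := by field_simp [eq_comm]; linarith [hub]
    rw [hub'] at E1
    field_simp at E1
    linear_combination E1
  · have k1 : y * (a + v ^ 2) = v * (a + y ^ 2) := by
      have h1 : u + x = y / (a + y ^ 2) := by rw [hu]; ring
      have h2 : u + x = v / (a + v ^ 2) := by rw [← E3]; ring
      have : y / (a + y ^ 2) = v / (a + v ^ 2) := by rw [← h1, h2]
      field_simp at this
      linarith [this]
    have k2 : (y - v) * (a - y * v) = 0 := by linear_combination k1
    have hyv : y * v = a := by
      rcases mul_eq_zero.mp k2 with h' | h'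
      · exact absurd (by linarith) hvy.symm
      · linarith
    have hy0 : y ≠ 0 := by rintro rfl; simp at hyv; nlinarith
    have E4' : (v + y) * (b + x ^ 2) = x := by
      rw [show v + y = x / (b + x ^ 2) by linarith [E4]]; field_simp
    have hv' : v = a / y := by field_simp [eq_comm]; linarith [hyv]
    rw [hv'] at E4'
    field_simp at E4'
    linear_combination E4'

lemma stmt10_lemE (a b x y : ℝ) (ha : 0 < a) (hb : 0 < b)
    (hR : x ^ 2 * y ^ 2 + a * x ^ 2 - x * y + b * y ^ 2 + a * b = 0) :
    a * b ≤ 1 / 16 := by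
  obtain ⟨s, hs0, hs⟩ : ∃ s : ℝ, 0 < s ∧ s ^ 2 = b :=
    ⟨Real.sqrt b, Real.sqrt_pos.mpr hb, Real.sq_sqrt hb.le⟩
  have h1 : (2 * (a + y ^ 2) * x - y) ^ 2 = y ^ 2 - 4 * b * (a + y ^ 2) ^ 2 := by
    linear_combination 4 * (a + y ^ 2) * hR
  have hy2 : y ^ 2 - 4 * b * (a + y ^ 2) ^ 2 ≥ 0 := h1 ▸ sq_nonneg _
  have hpos : 0 < 2 * s * (a + y ^ 2) := by positivity
  rcases le_or_gt 0 y with hy | hy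
  · have hyA : y ≥ 2 * s * (a + y ^ 2) := by nlinarith [hy2, hpos]
    nlinarith [sq_nonneg (4 * s * y - 1), hyA, hs0]
  · have hyA : -y ≥ 2 * s * (a + y ^ 2) := by nlinarith [hy2, hpos]
    nlinarith [sq_nonneg (4 * s * y + 1), hyA, hs0]

lemma stmt10_lemF (a b x y : ℝ) (ha : 0 < a) (hb : 0 < b) (hab : a * b = 1 / 16)
    (hR : x ^ 2 * y ^ 2 + a * x ^ 2 - x * y + b * y ^ 2 + a * b = 0) :
    x ^ 2 = b ∧ y ^ 2 = a := by
  have h1 : (2 * (a + y ^ 2) * x - y) ^ 2 + 4 * b * (y ^ 2 - a) ^ 2 = 0 := by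
    linear_combination 4 * (a + y ^ 2) * hR - 16 * y ^ 2 * hab
  have h2 : (y ^ 2 - a) ^ 2 = 0 := by nlinarith [sq_nonneg (2 * (a + y ^ 2) * x - y)]
  have hy2 : y ^ 2 = a := by nlinarith [h2]
  have h3 : (2 * (a + y ^ 2) * x - y) ^ 2 = 0 := by nlinarith [sq_nonneg (y ^ 2 - a)]
  have h4 : 4 * a * x = y := by
    rw [hy2] at h3
    have h3' := pow_eq_zero_iff (M₀ := ℝ) (n := 2) (by norm_num) |>.mp h3
    linarith
  have h5 : 16 * a ^ 2 * (x ^ 2 - b) = 0 := by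
    have : (4 * a * x) ^ 2 = y ^ 2 := by rw [h4]
    linear_combination this + hy2 - 16 * a * hab
  have h6 : x ^ 2 - b = 0 := by
    have ha2 : (16 : ℝ) * a ^ 2 ≠ 0 := by positivity
    exact (mul_eq_zero.mp h5).resolve_left ha2
  exact ⟨by linarith, hy2⟩

lemma stmt10_lemG (a b x y : ℝ) (ha : 0 < a) (hb : 0 < b) (hx : x ^ 2 = b) (hy : y ^ 2 = a)
    (hR : x ^ 2 * y ^ 2 + a * x ^ 2 - x * y + b * y ^ 2 + a * b = 0) :
    a * b = 1 / 16 := by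
  have h1 : x * y = 4 * (a * b) := by
    rw [hx, hy] at hR; linarith
  have h2 : 16 * (a * b) ^ 2 = a * b := by
    have : (x * y) ^ 2 = (4 * (a * b)) ^ 2 := by rw [h1]
    nlinarith [this, hx, hy]
  have hab : 0 < a * b := mul_pos ha hb
  nlinarith [h2, hab]

lemma stmt10_lemC (a b : ℝ) (ha : 0 < a) (hb : 0 < b) (hab : a * b ≤ 1 / 16) :
    ∃ x y : ℝ, x ^ 2 * y ^ 2 + a * x ^ 2 - x * y + b * y ^ 2 + a * b = 0 := by
  obtain ⟨s, hs0, hs⟩ : ∃ s : ℝ, 0 < s ∧ s ^ 2 = b :=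
    ⟨Real.sqrt b, Real.sqrt_pos.mpr hb, Real.sq_sqrt hb.le⟩
  obtain ⟨t, ht0, ht⟩ : ∃ t : ℝ, 0 ≤ t ∧ t ^ 2 = 1 - 16 * (a * b) :=
    ⟨Real.sqrt (1 - 16 * (a * b)), Real.sqrt_nonneg _,
      Real.sq_sqrt (by linarith)⟩
  subst hs
  refine ⟨s, (1 + t) / (4 * s), ?_⟩
  have hsne : (4 : ℝ) * s ≠ 0 := by positivity
  field_simp
  linear_combination 2 * ht

/-- `R(x,y) = x²y² + ax² - xy + by² + ab` has a real zero iff `ab ≤ 1/16`, and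
`G_{b,a} = G_b ∘ G_a` has points of minimal period two iff `ab < 1/16`. -/
theorem stmt10 (a b : ℝ) (ha : 0 < a) (hb : 0 < b) :
    ((∃ x y : ℝ, x ^ 2 * y ^ 2 + a * x ^ 2 - x * y + b * y ^ 2 + a * b = 0) ↔
      a * b ≤ 1 / 16) ∧
    ((∃ p : ℝ × ℝ, Gmap b (Gmap a (Gmap b (Gmap a p))) = p ∧
        Gmap b (Gmap a p) ≠ p) ↔ a * b < 1 / 16) := by
  constructor
  · constructor
    · rintro ⟨x, y, hR⟩
      exact stmt10_lemE a b x y ha hb hR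
    · intro hab
      exact stmt10_lemC a b ha hb hab
  · constructor
    · rintro ⟨⟨x, y⟩, h4, hne⟩
      have hR := stmt10_conv a b x y ha hb h4 hne
      rcases lt_or_eq_of_le (stmt10_lemE a b x y ha hb hR) with h | h
      · exact h
      · exfalso
        obtain ⟨hx2, hy2⟩ := stmt10_lemF a b x y ha hb h hR
        obtain ⟨hx0, hy0⟩ := stmt10_nz a b x y ha hb hR
        obtain ⟨g, -⟩ := stmt10_orbit a b x y ha hb hR
        have hbx : b / x = x := by rw [← hx2]; field_simp
        have hay : a / y = y := by rw [← hy2]; field_simp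
        rw [hbx, hay] at g
        exact hne g
    · intro hab
      obtain ⟨x, y, hR⟩ := stmt10_lemC a b ha hb hab.le
      obtain ⟨hx0, hy0⟩ := stmt10_nz a b x y ha hb hR
      obtain ⟨g1, g2⟩ := stmt10_orbit a b x y ha hb hR
      refine ⟨(x, y), by rw [g1, g2], ?_⟩
      rw [g1]
      intro hfix
      have hbx : b / x = x := congrArg Prod.fst hfix
      have hay : a / y = y := congrArg Prod.snd hfix
      have hx2 : x ^ 2 = b := by
        have := hbx
        field_simp at this
        linarith [this]
      have hy2 : y ^ 2 = a := by
        have := hay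
        field_simp at this
        linarith [this]
      have := stmt10_lemG a b x y ha hb hx2 hy2 hR
      linarith
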